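/- Let B1, …, Bn (n ≥ 2) be DFAs over a common alphabet Σ and x ∉ Σ. Construct A1 from B1 by adding states d1 (non-marked) and d1' (marked), x-transitions from every marked state of B1 to d1 and from d1 to d1', and marking all original states of B1; for i ≥ 2 construct Ai from Bi by adding a marked state di and x-transitions from every marked state of Bi to di, marking all states. Then cl(L_m(∥_{i=1}^n Ai)) = L(∥_{i=1}^n Ai) if and only if ∩_{i=1}^n L_m(Bi) = ∅. -/

import Mathlib

def cl {α : Type*} (L : Set (List α)) : Set (List α) := {w | ∃ u, w ++ u ∈ L}

structure DFA' (Q σ : Type*) where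
  δ : Q → σ → Option Q
  q0 : Q
  F : Set Q

def DFA'.evalFrom {Q σ : Type*} (A : DFA' Q σ) (o : Option Q) (w : List σ) : Option Q :=
  w.foldl (fun o a => o.bind fun q => A.δ q a) o

def DFA'.lang {Q σ : Type*} (A : DFA' Q σ) : Set (List σ) :=
  {w | (A.evalFrom (some A.q0) w).isSome}

def DFA'.langM {Q σ : Type*} (A : DFA' Q σ) : Set (List σ) :=
  {w | ∃ q ∈ A.F, A.evalFrom (some A.q0) w = some q}

open scoped Classical in
/-- `A1` built from `B1`: the alphabet is `Σ ∪ {x}` (`Option σ`, with `none`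
playing the role of `x`); two fresh states `d1 = Sum.inr false` (non-marked)
and `d1' = Sum.inr true` (marked) are added, with `x`-transitions from every
marked state of `B1` to `d1` and from `d1` to `d1'`; all original states
are marked. -/
noncomputable def aOne {Q σ : Type*} (B : DFA' Q σ) : DFA' (Q ⊕ Bool) (Option σ) where
  δ := fun q e =>
    match q, e with
    | Sum.inl q, some a => (B.δ q a).map Sum.inl
    | Sum.inl q, none => if q ∈ B.F then some (Sum.inr false) else none
    | Sum.inr false, none => some (Sum.inr true)
    | Sum.inr false, some _ => none
    | Sum.inr true, _ => none
  q0 := Sum.inl B.q0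
  F := Set.range Sum.inl ∪ {Sum.inr true}

open scoped Classical in
/-- `Ai` (for `i ≥ 2`) built from `Bi`: a fresh marked state `di = Sum.inr ()`
is added, with `x`-transitions from every marked state of `Bi` to `di`; all
states are marked. -/
noncomputable def aRest {Q σ : Type*} (B : DFA' Q σ) : DFA' (Q ⊕ Unit) (Option σ) where
  δ := fun q e =>
    match q, e with
    | Sum.inl q, some a => (B.δ q a).map Sum.inl
    | Sum.inl q, none => if q ∈ B.F then some (Sum.inr ()) else none
    | Sum.inr _, _ => none
  q0 := Sum.inl B.q0
  F := Set.univ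

section Helpers
variable {Q σ : Type*}

theorem evalFrom_none' (A : DFA' Q σ) (w : List σ) : A.evalFrom none w = none := by
  induction w with
  | nil => rfl
  | cons a w ih => exact ih

theorem evalFrom_append' (A : DFA' Q σ) (o : Option Q) (u v : List σ) :
    A.evalFrom o (u ++ v) = A.evalFrom (A.evalFrom o u) v :=
  List.foldl_append

theorem lang_prefix (A : DFA' Q σ) {w u : List σ} (h : w ++ u ∈ A.lang) : w ∈ A.lang := by
  simp only [DFA'.lang, Set.mem_setOf_eq, evalFrom_append'] at h ⊢
  cases hq : A.evalFrom (some A.q0) w with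
  | none => rw [hq, evalFrom_none'] at h; simp at h
  | some q => simp

theorem langM_subset_lang (A : DFA' Q σ) : A.langM ⊆ A.lang := by
  rintro w ⟨q, _, h⟩
  simp [DFA'.lang, h]

theorem aOne_eval_map (B : DFA' Q σ) (v : List σ) : ∀ o : Option Q,
    (aOne B).evalFrom (Option.map Sum.inl o) (v.map some) = (B.evalFrom o v).map Sum.inl := by
  induction v with
  | nil => intro o; rfl
  | cons a v ih =>
    intro o
    cases o with
    | none => simp [evalFrom_none']
    | some q => exact ih (B.δ q a)

theorem aRest_eval_map (B : DFA' Q σ) (v : List σ) : ∀ o : Option Q,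
    (aRest B).evalFrom (Option.map Sum.inl o) (v.map some) = (B.evalFrom o v).map Sum.inl := by
  induction v with
  | nil => intro o; rfl
  | cons a v ih =>
    intro o
    cases o with
    | none => simp [evalFrom_none']
    | some q => exact ih (B.δ q a)

theorem aRest_langM_eq (B : DFA' Q σ) : (aRest B).langM = (aRest B).lang := by
  ext w
  constructor
  · exact fun h => langM_subset_lang _ h
  · intro h
    obtain ⟨q, hq⟩ := Option.isSome_iff_exists.1 h
    exact ⟨q, Set.mem_univ q, hq⟩

theorem decomp (w : List (Option σ)) :
    (∃ v : List σ, w = v.map some) ∨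
      ∃ (v : List σ) (u : List (Option σ)), w = v.map some ++ none :: u := by
  induction w with
  | nil => exact Or.inl ⟨[], rfl⟩
  | cons a w ih =>
    cases a with
    | none => exact Or.inr ⟨[], w, rfl⟩
    | some b =>
      rcases ih with ⟨v, rfl⟩ | ⟨v, u, rfl⟩
      · exact Or.inl ⟨b :: v, rfl⟩
      · exact Or.inr ⟨b :: v, u, rfl⟩

theorem aOne_impure (B : DFA' Q σ) (v : List σ) (u : List (Option σ))
    (h : v.map some ++ none :: u ∈ (aOne B).lang) : v ∈ B.langM := by
  simp only [DFA'.lang, Set.mem_setOf_eq, evalFrom_append'] at h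
  rw [show (some (aOne B).q0 : Option (Q ⊕ Bool)) = Option.map Sum.inl (some B.q0) from rfl,
    aOne_eval_map] at h
  cases hq : B.evalFrom (some B.q0) v with
  | none => simp only [hq, Option.map_none, evalFrom_none'] at h; simp at h
  | some q =>
    simp only [hq, Option.map_some] at h
    refine ⟨q, ?_, hq⟩
    by_contra hf
    have hstep : (aOne B).evalFrom (some (Sum.inl q)) (none :: u)
        = (aOne B).evalFrom ((aOne B).δ (Sum.inl q) none) u := rfl
    have hd : (aOne B).δ (Sum.inl q) none = none := by simp [aOne, hf]
    rw [hstep, hd, evalFrom_none'] at h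
    simp at h

theorem aRest_impure (B : DFA' Q σ) (v : List σ) (u : List (Option σ))
    (h : v.map some ++ none :: u ∈ (aRest B).lang) : v ∈ B.langM ∧ u = [] := by
  simp only [DFA'.lang, Set.mem_setOf_eq, evalFrom_append'] at h
  rw [show (some (aRest B).q0 : Option (Q ⊕ Unit)) = Option.map Sum.inl (some B.q0) from rfl,
    aRest_eval_map] at h
  cases hq : B.evalFrom (some B.q0) v with
  | none => simp only [hq, Option.map_none, evalFrom_none'] at h; simp at h
  | some q =>
    simp only [hq, Option.map_some] at h
    have hstep : (aRest B).evalFrom (some (Sum.inl q)) (none :: u)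
        = (aRest B).evalFrom ((aRest B).δ (Sum.inl q) none) u := rfl
    by_cases hf : q ∈ B.F
    · have hd : (aRest B).δ (Sum.inl q) none = some (Sum.inr ()) := by simp [aRest, hf]
      rw [hstep, hd] at h
      refine ⟨⟨q, hf, hq⟩, ?_⟩
      cases u with
      | nil => rfl
      | cons a u =>
        have hstep2 : (aRest B).evalFrom (some (Sum.inr ())) (a :: u)
            = (aRest B).evalFrom none u := rfl
        rw [hstep2, evalFrom_none'] at h
        simp at h
    · have hd : (aRest B).δ (Sum.inl q) none = none := by simp [aRest, hf]
      rw [hstep, hd, evalFrom_none'] at h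
      simp at h

theorem aOne_eval_append_none (B : DFA' Q σ) {v : List σ} (hv : v ∈ B.langM) :
    (aOne B).evalFrom (some (aOne B).q0) (v.map some ++ [none]) = some (Sum.inr false) := by
  obtain ⟨q, hf, hq⟩ := hv
  rw [evalFrom_append',
    show (some (aOne B).q0 : Option (Q ⊕ Bool)) = Option.map Sum.inl (some B.q0) from rfl,
    aOne_eval_map, hq]
  show (aOne B).evalFrom ((aOne B).δ (Sum.inl q) none) [] = _
  simp [aOne, hf, DFA'.evalFrom]

theorem aRest_eval_append_none (B : DFA' Q σ) {v : List σ} (hv : v ∈ B.langM) :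
    (aRest B).evalFrom (some (aRest B).q0) (v.map some ++ [none]) = some (Sum.inr ()) := by
  obtain ⟨q, hf, hq⟩ := hv
  rw [evalFrom_append',
    show (some (aRest B).q0 : Option (Q ⊕ Unit)) = Option.map Sum.inl (some B.q0) from rfl,
    aRest_eval_map, hq]
  show (aRest B).evalFrom ((aRest B).δ (Sum.inl q) none) [] = _
  simp [aRest, hf, DFA'.evalFrom]

end Helpers

/-- since all `Ai` are over the common alphabet `Σ ∪ {x}`, the
languages of their parallel composition are the intersections of their
languages, and the composition is nonblocking iff `∩ L_m(Bi) = ∅`. -/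
theorem modular_nonblocking_iff_empty_intersection {σ : Type*} (n : ℕ) (hn : 2 ≤ n)
    (Q : Fin n → Type*) (B : ∀ i, DFA' (Q i) σ) :
    cl ((aOne (B ⟨0, by omega⟩)).langM ∩
        ⋂ (i : Fin n) (_ : i ≠ ⟨0, by omega⟩), (aRest (B i)).langM) =
      (aOne (B ⟨0, by omega⟩)).lang ∩
        ⋂ (i : Fin n) (_ : i ≠ ⟨0, by omega⟩), (aRest (B i)).lang ↔
    ⋂ i, (B i).langM = ∅ := by
  
  constructor
  · intro heq
    rw [← Set.not_nonempty_iff_eq_empty]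
    rintro ⟨v, hv⟩
    simp only [Set.mem_iInter] at hv
    have hwR : (v.map some ++ [none]) ∈
        (aOne (B ⟨0, by omega⟩)).lang ∩
          ⋂ (i : Fin n) (_ : i ≠ ⟨0, by omega⟩), (aRest (B i)).lang := by
      constructor
      · simp [DFA'.lang, aOne_eval_append_none _ (hv ⟨0, by omega⟩)]
      · simp only [Set.mem_iInter]
        intro i _
        simp [DFA'.lang, aRest_eval_append_none _ (hv i)]
    rw [← heq] at hwR
    obtain ⟨u, hu1, hu2⟩ := hwR
    simp only [Set.mem_iInter] at hu2
    have h1 : (v.map some ++ [none]) ++ u ∈ (aRest (B ⟨1, by omega⟩)).langM :=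
      hu2 ⟨1, by omega⟩ (by simp [Fin.ext_iff])
    rw [aRest_langM_eq, List.append_assoc] at h1
    have hu0 : u = [] := (aRest_impure _ v u h1).2
    subst hu0
    rw [List.append_nil] at hu1
    obtain ⟨q, hqF, hq⟩ := hu1
    rw [aOne_eval_append_none _ (hv ⟨0, by omega⟩)] at hq
    obtain rfl : (Sum.inr false : _ ⊕ Bool) = q := Option.some_injective _ hq
    simp [aOne] at hqF
  · intro hempty
    apply Set.Subset.antisymm
    · rintro w ⟨u, hu1, hu2⟩
      simp only [Set.mem_iInter] at hu2
      constructor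
      · exact lang_prefix _ (langM_subset_lang _ hu1)
      · simp only [Set.mem_iInter]
        intro i hi
        exact lang_prefix _ (langM_subset_lang _ (hu2 i hi))
    · rintro w ⟨h1, h2⟩
      simp only [Set.mem_iInter] at h2
      rcases decomp w with ⟨v, rfl⟩ | ⟨v, u, rfl⟩
      · refine ⟨[], ?_, ?_⟩
        · rw [List.append_nil]
          simp only [DFA'.lang, Set.mem_setOf_eq] at h1
          rw [show (some (aOne (B ⟨0, by omega⟩)).q0 : Option _)
                = Option.map Sum.inl (some (B ⟨0, by omega⟩).q0) from rfl,
            aOne_eval_map] at h1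
          cases hq : (B ⟨0, by omega⟩).evalFrom (some (B ⟨0, by omega⟩).q0) v with
          | none => rw [hq] at h1; simp at h1
          | some q =>
            refine ⟨Sum.inl q, by simp [aOne], ?_⟩
            rw [show (some (aOne (B ⟨0, by omega⟩)).q0 : Option _)
                  = Option.map Sum.inl (some (B ⟨0, by omega⟩).q0) from rfl,
              aOne_eval_map, hq]
            rfl
        · rw [List.append_nil]
          simp only [Set.mem_iInter]
          intro i hi
          rw [aRest_langM_eq]
          exact h2 i hi
      · exfalso
        have hv0 : v ∈ (B ⟨0, by omega⟩).langM := aOne_impure _ v u h1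
        have hvi : ∀ i, i ≠ (⟨0, by omega⟩ : Fin n) → v ∈ (B i).langM :=
          fun i hi => (aRest_impure _ v u (h2 i hi)).1
        have hmem : v ∈ ⋂ i, (B i).langM := by
          rw [Set.mem_iInter]
          intro i
          by_cases hi : i = (⟨0, by omega⟩ : Fin n)
          · subst hi; exact hv0
          · exact hvi i hi
        rw [hempty] at hmem
        exact hmem
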